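/- For the loss function l(x) = x⁺/α with α ∈ (0,1) and cost c(x,y) = |x−y|: if 0 ≤ λ < 1/α then sup_y ( y⁺/α − λ|x−y| ) = ∞ for every x, and if λ ≥ 1/α then sup_y ( y⁺/α − λ|x−y| ) = x⁺/α for every x. -/

import Mathlib

open MeasureTheory Set Filter Topology

/-- for `l(x) = x⁺/α`, `α ∈ (0,1)` and cost `c(x,y) = |x−y|`: if `0 ≤ λ < 1/α`
then `sup_y (y⁺/α − λ|x−y|) = ∞` for every `x`, and if `λ ≥ 1/α` then it equals `x⁺/α`. -/
theorem lambda_c_transform_avar_linear (α : ℝ) (hα : α ∈ Set.Ioo (0 : ℝ) 1) (lam : ℝ) :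
    (0 ≤ lam → lam < 1 / α → ∀ x : ℝ,
      (⨆ y : ℝ, ((max y 0 / α - lam * |x - y| : ℝ) : EReal)) = (⊤ : EReal)) ∧
    (1 / α ≤ lam → ∀ x : ℝ,
      (⨆ y : ℝ, ((max y 0 / α - lam * |x - y| : ℝ) : EReal)) = ((max x 0 / α : ℝ) : EReal)) := by
  obtain ⟨hα0, hα1⟩ := hα
  constructor
  · intro hlam0 hlam x
    rw [EReal.eq_top_iff_forall_lt]
    intro M
    set ε : ℝ := 1 / α - lam with hε
    have hεpos : 0 < ε := sub_pos.mpr hlam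
    set y : ℝ := max (max x 0) ((M + 1 - lam * x) / ε) with hy
    have hy0 : 0 ≤ y := le_trans (le_max_right x 0) (le_max_left _ _)
    have hyx : x ≤ y := le_trans (le_max_left x 0) (le_max_left _ _)
    have hval : max y 0 / α - lam * |x - y| = ε * y + lam * x := by
      rw [max_eq_left hy0, abs_of_nonpos (by linarith)]
      field_simp [hε]
      rw [hε]; linear_combination (-y) * (mul_one_div_cancel hα0.ne' : α * (1 / α) = 1)
    have hM : (M : ℝ) < max y 0 / α - lam * |x - y| := by
      rw [hval]
      have : (M + 1 - lam * x) / ε ≤ y := le_max_right _ _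
      have h2 : M + 1 - lam * x ≤ ε * y := by
        rw [div_le_iff₀ hεpos] at this; linarith [this]
      linarith
    calc (M : EReal) < ((max y 0 / α - lam * |x - y| : ℝ) : EReal) := by
          exact_mod_cast hM
      _ ≤ _ := le_iSup (fun y : ℝ => ((max y 0 / α - lam * |x - y| : ℝ) : EReal)) y
  · intro hlam x
    apply le_antisymm
    · apply iSup_le
      intro y
      have hb : max y 0 / α - lam * |x - y| ≤ max x 0 / α := by
        have h1 : max y 0 ≤ max x 0 + |x - y| := by
          rcases le_total y 0 with h | h
          · simp [max_eq_right h]; positivity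
          · rw [max_eq_left h]
            have := abs_nonneg (x - y)
            have := neg_abs_le (x - y)
            have := le_max_left x 0
            linarith
        have h2 : max y 0 / α ≤ max x 0 / α + |x - y| / α := by
          rw [← add_div]; gcongr
        have h3 : |x - y| / α ≤ lam * |x - y| := by
          calc |x - y| / α = (1 / α) * |x - y| := by ring
            _ ≤ lam * |x - y| := mul_le_mul_of_nonneg_right hlam (abs_nonneg _)
        linarith
      exact_mod_cast hb
    · have : ((max x 0 / α : ℝ) : EReal) = ((max x 0 / α - lam * |x - x| : ℝ) : EReal) := by
        norm_num
      rw [this]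
      exact le_iSup (fun y : ℝ => ((max y 0 / α - lam * |x - y| : ℝ) : EReal)) x
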